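/- Let n ≥ 1 and d ≥ 1 be natural numbers, and let M be an n × n matrix with nonnegative integer entries such that every row sum of M equals d and every column sum of M equals d. Then there exist permutations σ₁, …, σ_d of {1, …, n} such that for all indices i, j, the entry M(i,j) equals the number of k ∈ {1, …, d} with σ_k(i) = j; in other words, M is the sum of the d permutation matrices associated to σ₁, …, σ_d. -/
import Mathlib

open Finset

/-- Hall step: extract a permutation inside the support. -/
lemma ibvn_exists_perm (n d : ℕ) (M : Matrix (Fin n) (Fin n) ℕ)
    (hrow : ∀ i, ∑ j, M i j = d + 1) (hcol : ∀ j, ∑ i, M i j = d + 1) :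
    ∃ σ : Equiv.Perm (Fin n), ∀ i, 1 ≤ M i (σ i) := by
  let f (i : Fin n) : Finset (Fin n) := {j | M i j ≠ 0}
  have hf (A : Finset (Fin n)) : #A ≤ #(A.biUnion f) := by
    have key (i) : ∑ j ∈ f i, M i j = d + 1 := by
      rw [← hrow i]
      exact sum_subset (filter_subset _ _) (by intro x _ hx; simpa [f] using hx)
    have h₁ : ∑ i ∈ A, ∑ j ∈ f i, M i j = #A * (d + 1) := by simp [key]
    have h₂ : ∑ j ∈ A.biUnion f, ∑ i, M i j = #(A.biUnion f) * (d + 1) := by simp [hcol]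
    have h₃ : ∑ i ∈ A, ∑ j ∈ f i, M i j ≤ ∑ j ∈ A.biUnion f, ∑ i, M i j := by
      rw [sum_comm]
      calc ∑ i ∈ A, ∑ j ∈ f i, M i j
          ≤ ∑ i ∈ A, ∑ j ∈ A.biUnion f, M i j :=
            sum_le_sum fun i hi => sum_le_sum_of_subset (subset_biUnion_of_mem f hi)
        _ ≤ ∑ i, ∑ j ∈ A.biUnion f, M i j := sum_le_sum_of_subset (subset_univ A)
    rw [h₁, h₂] at h₃
    exact Nat.le_of_mul_le_mul_right h₃ (Nat.succ_pos d)
  obtain ⟨g, hg, hg'⟩ := (all_card_le_biUnion_card_iff_exists_injective f).1 hf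
  rw [Finite.injective_iff_bijective] at hg
  refine ⟨Equiv.ofBijective g hg, fun i => ?_⟩
  have := hg' i
  simp only [f, mem_filter, mem_univ, true_and] at this
  simpa [Equiv.ofBijective_apply, Nat.one_le_iff_ne_zero] using this

lemma ibvn_aux (n : ℕ) : ∀ d (M : Matrix (Fin n) (Fin n) ℕ),
    (∀ i, ∑ j, M i j = d) → (∀ j, ∑ i, M i j = d) →
    ∃ σ : Fin d → Equiv.Perm (Fin n),
      ∀ i j, M i j = (Finset.univ.filter fun k : Fin d => σ k i = j).card := by
  intro d
  induction d with
  | zero =>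
    intro M hrow hcol
    refine ⟨Fin.elim0, fun i j => ?_⟩
    have := hrow i
    have h0 : M i j = 0 := by
      have := Finset.sum_eq_zero_iff.mp this j (mem_univ j)
      exact this
    simp [h0]
  | succ d ih =>
    intro M hrow hcol
    obtain ⟨σ, hσ⟩ := ibvn_exists_perm n d M hrow hcol
    set N : Matrix (Fin n) (Fin n) ℕ := fun i j => M i j - (if σ i = j then 1 else 0) with hN
    have hpoint : ∀ i j, N i j + (if σ i = j then 1 else 0) = M i j := by
      intro i j
      by_cases h : σ i = j
      · subst h; have := hσ i; simp [hN]; omega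
      · simp [hN, h]
    have hrowite : ∀ i, ∑ j, (if σ i = j then 1 else 0) = 1 := by
      intro i; simp [Finset.sum_ite_eq' Finset.univ (σ i) (fun _ => 1)]
    have hcolite : ∀ j, ∑ i, (if σ i = j then 1 else 0) = 1 := by
      intro j
      have : ∀ i : Fin n, (σ i = j) ↔ (i = σ.symm j) := by
        intro i; exact ⟨fun h => by simp [← h], fun h => by subst h; simp⟩
      simp only [this]
      simp [Finset.sum_ite_eq' Finset.univ (σ.symm j) (fun _ => 1)]
    have hrowN : ∀ i, ∑ j, N i j = d := by
      intro i
      have h1 : ∑ j, (N i j + (if σ i = j then 1 else 0)) = d + 1 := by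
        rw [← hrow i]; exact Finset.sum_congr rfl fun j _ => hpoint i j
      rw [Finset.sum_add_distrib, hrowite i] at h1
      omega
    have hcolN : ∀ j, ∑ i, N i j = d := by
      intro j
      have h1 : ∑ i, (N i j + (if σ i = j then 1 else 0)) = d + 1 := by
        rw [← hcol j]; exact Finset.sum_congr rfl fun i _ => hpoint i j
      rw [Finset.sum_add_distrib, hcolite j] at h1
      omega
    obtain ⟨τ, hτ⟩ := ih N hrowN hcolN
    refine ⟨Fin.cons σ τ, fun i j => ?_⟩
    have hc : ∀ (m : ℕ) (σs : Fin m → Equiv.Perm (Fin n)),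
        (Finset.univ.filter fun k : Fin m => σs k i = j).card
          = ∑ k : Fin m, (if σs k i = j then 1 else 0) := by
      intro m σs; rw [Finset.card_filter]
    rw [hc, Fin.sum_univ_succ]
    simp only [Fin.cons_zero, Fin.cons_succ]
    rw [← hc d τ, ← hτ i j, ← hpoint i j]
    omega

/-- **Integer Birkhoff–von Neumann decomposition.**
If `M` is an `n × n` matrix of nonnegative integers in which every row sum and every
column sum equals `d` (with `n ≥ 1`, `d ≥ 1`), then `M` is the sum of `d` permutation
matrices: there are permutations `σ 0, …, σ (d-1)` of `Fin n` such that `M i j` equals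
the number of `k` with `σ k i = j`. -/
theorem integer_birkhoff_von_neumann (n d : ℕ) (hn : 1 ≤ n) (hd : 1 ≤ d)
    (M : Matrix (Fin n) (Fin n) ℕ)
    (hrow : ∀ i, ∑ j, M i j = d) (hcol : ∀ j, ∑ i, M i j = d) :
    ∃ σ : Fin d → Equiv.Perm (Fin n),
      ∀ i j, M i j = (Finset.univ.filter fun k : Fin d => σ k i = j).card := by
  exact ibvn_aux n d M hrow hcol
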